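/- arXiv:1908.10330 — 12 statements merged into one kernel-verified Lean document; each statement's English description precedes it below -/
import Mathlib

section
/- For any k > 0 and ρ ∈ [0, 1), the function β̂(β) = (1 + kρβ)/(1 + k²β² + 2kρβ) has exactly one fixed point on [0, ∞), and that fixed point lies in the open interval (0, 1). -/
/-- For k > 0 and ρ ∈ [0,1), β̂(β) = (1 + kρβ)/(1 + k²β² + 2kρβ) has exactly one
fixed point on [0,∞), and it lies in (0,1). -/
theorem stmt_1 (k ρ : ℝ) (hk : 0 < k) (hρ : ρ ∈ Set.Ico (0 : ℝ) 1) :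
    (∃! β : ℝ, 0 ≤ β ∧ (1 + k*ρ*β) / (1 + k^2*β^2 + 2*k*ρ*β) = β) ∧
    (∀ β : ℝ, 0 ≤ β → (1 + k*ρ*β) / (1 + k^2*β^2 + 2*k*ρ*β) = β →
      β ∈ Set.Ioo (0 : ℝ) 1) := by
  obtain ⟨hρ0, hρ1⟩ := hρ
  have hD : ∀ β : ℝ, 0 ≤ β → 0 < 1 + k^2*β^2 + 2*k*ρ*β := by
    intro β hβ
    have h1 : 0 ≤ k^2*β^2 := by positivity
    have h2 : 0 ≤ 2*k*ρ*β := by positivity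
    linarith
  have key : ∀ β : ℝ, 0 ≤ β →
      ((1 + k*ρ*β) / (1 + k^2*β^2 + 2*k*ρ*β) = β ↔
        k^2*β^3 + 2*k*ρ*β^2 + β - k*ρ*β - 1 = 0) := by
    intro β hβ
    rw [div_eq_iff (hD β hβ).ne']
    constructor <;> intro h <;> nlinarith [h]
  -- any nonneg fixed point lies in (0,1)
  have mem : ∀ β : ℝ, 0 ≤ β → (1 + k*ρ*β) / (1 + k^2*β^2 + 2*k*ρ*β) = β →
      β ∈ Set.Ioo (0 : ℝ) 1 := by
    intro β hβ heq
    have hP := (key β hβ).mp heq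
    have hpos : 0 < β := by
      rcases lt_or_eq_of_le hβ with h | h
      · exact h
      · exfalso; rw [← h] at hP; norm_num at hP
    refine ⟨hpos, ?_⟩
    by_contra h
    push_neg at h
    have h1 : 0 ≤ k*ρ*β*(β-1) := by
      have : (0:ℝ) ≤ β - 1 := by linarith
      positivity
    have h2 : 0 ≤ k*ρ*β^2 := by positivity
    have h3 : 0 < k^2*β^3 := by positivity
    nlinarith [h1, h2, h3]
  refine ⟨?_, mem⟩
  -- existence via IVT on [0,1]
  have hcont : ContinuousOn (fun β : ℝ => k^2*β^3 + 2*k*ρ*β^2 + β - k*ρ*β - 1)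
      (Set.Icc (0:ℝ) 1) := by fun_prop
  have hiv := intermediate_value_Ioo (by norm_num : (0:ℝ) ≤ 1) hcont
  have h0mem : (0:ℝ) ∈ Set.Ioo (k^2*0^3 + 2*k*ρ*0^2 + 0 - k*ρ*0 - 1)
      (k^2*1^3 + 2*k*ρ*1^2 + 1 - k*ρ*1 - 1) := by
    constructor <;> [norm_num; nlinarith]
  obtain ⟨β, hβmem, hfβ⟩ := hiv h0mem
  obtain ⟨hβ0, hβ1⟩ := hβmem
  refine ⟨β, ⟨hβ0.le, (key β hβ0.le).mpr hfβ⟩, ?_⟩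
  rintro b ⟨hb0, hbeq⟩
  have hPb := (key b hb0).mp hbeq
  have hbpos : 0 < b := (mem b hb0 hbeq).1
  have hfac : (b - β) * (k^2*b*β*(b+β) + 2*k*ρ*b*β + 1) = 0 := by
    linear_combination β * hPb - b * hfβ
  have hpos2 : 0 < k^2*b*β*(b+β) + 2*k*ρ*b*β + 1 := by
    have h1 : 0 < k^2*b*β*(b+β) := by positivity
    have h2 : 0 ≤ 2*k*ρ*b*β := by positivity
    linarith
  have := mul_eq_zero.mp hfac
  rcases this with h | h
  · linarith
  · linarith
end

section
/- Let k > 0 and ρ ∈ (-1, 1), and let L(β) = (kβ² + β - 1)² + 2(1-ρ)β²(1-β)k. If β is any real number satisfying the fixed-point equation k²β³ + 2kρβ² + (1 - kρ)β - 1 = 0, then L'(β) > 0. -/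
/-- At any fixed point β (root of the cubic k²β³ + 2kρβ² + (1-kρ)β - 1 = 0),
the derivative of the welfare loss L is strictly positive. -/
theorem stmt_4 (k ρ : ℝ) (hk : 0 < k) (hρ : ρ ∈ Set.Ioo (-1 : ℝ) 1)
    (β : ℝ) (hβ : k^2 * β^3 + 2*k*ρ*β^2 + (1 - k*ρ)*β - 1 = 0) :
    deriv (fun b : ℝ => (k*b^2 + b - 1)^2 + 2*(1-ρ)*b^2*(1-b)*k) β > 0 := by
  obtain ⟨hρ1, hρ2⟩ := hρ
  -- compute the derivative
  have h1 : HasDerivAt (fun b : ℝ => k*b^2 + b - 1) (k*(2*β) + 1) β := by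
    have := (((hasDerivAt_pow 2 β).const_mul k).add (hasDerivAt_id β)).sub_const 1
    simpa using this
  have h2 : HasDerivAt (fun b : ℝ => (k*b^2 + b - 1)^2)
      (2 * (k*β^2 + β - 1) ^ 1 * (k*(2*β) + 1)) β := by
    simpa using h1.fun_pow 2
  have h3 : HasDerivAt (fun b : ℝ => 2*(1-ρ)*b^2*(1-b)*k)
      ((2*(1-ρ)*(2*β) * (1-β) + 2*(1-ρ)*β^2 * (-1)) * k) β := by
    have ha : HasDerivAt (fun b : ℝ => 2*(1-ρ)*b^2) (2*(1-ρ)*(2*β)) β := by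
      simpa using (hasDerivAt_pow 2 β).const_mul (2*(1-ρ))
    have hb : HasDerivAt (fun b : ℝ => 1 - b) (-1 : ℝ) β := by
      simpa using (hasDerivAt_id β).const_sub 1
    exact (ha.mul hb).mul_const k
  have hD : deriv (fun b : ℝ => (k*b^2 + b - 1)^2 + 2*(1-ρ)*b^2*(1-b)*k) β
      = 2 * (k*β^2 + β - 1) ^ 1 * (k*(2*β) + 1)
        + (2*(1-ρ)*(2*β) * (1-β) + 2*(1-ρ)*β^2 * (-1)) * k :=
    (h2.add h3).deriv
  rw [hD]
  -- key algebraic facts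
  have hβ0 : β ≠ 0 := by
    intro h; rw [h] at hβ; norm_num at hβ
  have hDpos : 0 < k^2*β^2 + 2*k*ρ*β + 1 := by
    nlinarith [sq_nonneg (k*β + ρ), sq_nonneg ρ]
  have hkey : (1 - β - k*ρ*β^2) * (k^2*β^2 + 2*k*ρ*β + 1)
      = k^2*β^2*(1-ρ^2) - (1 + k*ρ*β) * (k^2 * β^3 + 2*k*ρ*β^2 + (1 - k*ρ)*β - 1) := by
    ring
  have ht : 0 < 1 - β - k*ρ*β^2 := by
    have hrhs : 0 < k^2*β^2*(1-ρ^2) := by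
      have h1 : 0 < k^2*β^2 := by positivity
      have h2 : 0 < 1 - ρ^2 := by nlinarith
      exact mul_pos h1 h2
    rw [hβ] at hkey
    have := hkey
    nlinarith
  nlinarith [ht, hβ]
end

section
/- For k > 0 and ρ ∈ (-1, 1), the function L(β) = (kβ² + β - 1)² + 2(1-ρ)β²(1-β)k attains a unique global minimum over ℝ at some β* ∈ (0, 2), and moreover L''(β*) > 0. -/
set_option maxHeartbeats 1000000 in
lemma key (k ρ β : ℝ) (hk : 0 < k) (h1 : -1 < ρ) (h2 : ρ < 1) (hb0 : 0 < β) (hb2 : β < 2)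
    (hD : 4*k^2*β^3+6*k*ρ*β^2+2*(1-2*k*ρ)*β-2 = 0) :
    0 < 12*k^2*β^2+12*k*ρ*β+2-4*k*ρ := by
  set w : ℝ := 2*k*β-1 with hw
  set u : ℝ := k*β^2-β+1 with hu
  have h2u : 2*u = β*w + (2-β) := by rw [hu, hw]; ring
  have hw1 : -1 < w := by rw [hw]; nlinarith [mul_pos hk hb0]
  have hsV : (β*(3*β-2)) * (12*k^2*β^2+12*k*ρ*β+2-4*k*ρ)
      = β*(3*β-4)*(w*(w+2)) + (3*β-2)*(2-β) := by
    rw [hw]; linear_combination (2*(3*β-1)) * hD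
  rcases lt_trichotomy β (2/3) with h | h | h
  · -- β < 2/3 : s < 0, w > 0, T < 0
    have hs : β*(3*β-2) < 0 := mul_neg_of_pos_of_neg hb0 (by linarith)
    have huw : u*w = (1+ρ)*(k*(β*(2-3*β))) := by
      rw [hu, hw]; linear_combination (1/2) * hD
    have huwp : 0 < u*w := by
      rw [huw]
      exact mul_pos (by linarith) (mul_pos hk (mul_pos hb0 (by linarith)))
    have hwpos : 0 < w := by
      rcases le_or_gt w 0 with hw0 | hw0
      · exfalso
        have hb : β*(-1) < β*w := mul_lt_mul_of_pos_left hw1 hb0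
        have hupos : 0 < u := by linarith
        nlinarith [mul_nonneg hupos.le (neg_nonneg.mpr hw0)]
      · exact hw0
    have t1 : 0 < (β*(4-3*β))*(w*(w+2)) :=
      mul_pos (mul_pos hb0 (by linarith)) (mul_pos hwpos (by linarith))
    have t2 : 0 < (2-3*β)*(2-β) := mul_pos (by linarith) (by linarith)
    have hT : β*(3*β-4)*(w*(w+2)) + (3*β-2)*(2-β) < 0 := by nlinarith [t1, t2]
    by_contra hV
    push_neg at hV
    nlinarith [mul_nonneg (neg_nonneg.mpr hs.le) (neg_nonneg.mpr hV)]
  · -- β = 2/3 : forces k = 3/4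
    subst h
    have hk2 : k^2 = 9/16 := by linear_combination (27/32) * hD
    have hfac : (k - 3/4)*(k + 3/4) = 0 := by linear_combination hk2
    rcases mul_eq_zero.mp hfac with hke | hke
    · have : k = 3/4 := by linarith
      subst this
      norm_num
      linarith
    · exfalso; linarith
  · -- β > 2/3 : s > 0, w < 0, T > 0
    have hs : 0 < β*(3*β-2) := mul_pos hb0 (by linarith)
    have huw : u*w = -((1+ρ)*(k*(β*(3*β-2)))) := by
      rw [hu, hw]; linear_combination (1/2) * hD
    have huwn : u*w < 0 := by
      rw [huw]
      have : 0 < (1+ρ)*(k*(β*(3*β-2))) := mul_pos (by linarith) (mul_pos hk hs)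
      linarith
    have hwneg : w < 0 := by
      rcases le_or_gt 0 w with hw0 | hw0
      · exfalso
        have hupos : 0 < u := by nlinarith [mul_nonneg (mul_pos hk hb0).le hw0]
        nlinarith [mul_nonneg hupos.le hw0]
      · exact hw0
    have hbw : 0 < β*w + (2-β) := by
      rcases le_or_gt (β*w + (2-β)) 0 with hq | hq
      · exfalso
        have hun : u ≤ 0 := by linarith
        nlinarith [mul_nonneg (neg_nonneg.mpr hun) (neg_nonneg.mpr hwneg.le)]
      · exact hq
    have hw2 : 0 < w + 2 := by linarith
    have hT : 0 < β*(3*β-4)*(w*(w+2)) + (3*β-2)*(2-β) := by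
      rcases le_or_gt (3*β-4) 0 with h34 | h34
      · have t1 : 0 ≤ (β*(4-3*β))*((-w)*(w+2)) :=
          mul_nonneg (mul_nonneg hb0.le (by linarith)) (mul_nonneg (by linarith) hw2.le)
        have t2 : 0 < (3*β-2)*(2-β) := mul_pos (by linarith) (by linarith)
        nlinarith [t1, t2]
      · have ha0 : 0 < β*(-w) := mul_pos hb0 (by linarith)
        have ha : β*(-w) < 2-β := by linarith
        have hq : (β*(-w))*(w+2) < (2-β)*2 := mul_lt_mul'' ha (by linarith) ha0.le hw2.le
        have hr : (3*β-4)*((β*(-w))*(w+2)) < (3*β-4)*((2-β)*2) :=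
          (mul_lt_mul_iff_right₀ h34).mpr hq
        have hlast : (3*β-4)*((2-β)*2) ≤ (3*β-2)*(2-β) := by
          nlinarith [mul_nonneg (by linarith : (0:ℝ) ≤ 2-β) (by linarith : (0:ℝ) ≤ 6-3*β)]
        nlinarith [hr, hlast]
    nlinarith [mul_pos hs (show (0:ℝ) < 12*k^2*β^2+12*k*ρ*β+2-4*k*ρ from by nlinarith [hT, hs])]

lemma fderiv1 (k ρ : ℝ) :
    deriv (fun b : ℝ => (k*b^2 + b - 1)^2 + 2*(1-ρ)*b^2*(1-b)*k)
      = fun x => 4*k^2*x^3+6*k*ρ*x^2+2*(1-2*k*ρ)*x-2 := by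
  funext x
  have h1 : HasDerivAt (fun b : ℝ => k*b^2 + b - 1) (k*(2*x^1)+1) x := by
    simpa using (((hasDerivAt_pow 2 x).const_mul k).add (hasDerivAt_id x)).sub_const 1
  have h2 : HasDerivAt (fun b : ℝ => (k*b^2 + b - 1)^2)
      (2*(k*x^2+x-1)^1*(k*(2*x^1)+1)) x := by
    simpa using (show HasDerivAt (fun b : ℝ => (k*b^2 + b - 1)^2) _ x from h1.pow 2)
  have h3 : HasDerivAt (fun b : ℝ => 2*(1-ρ)*b^2*(1-b)*k)
      (((2*(1-ρ)*(2*x^1))*(1-x) + 2*(1-ρ)*x^2*(-1))*k) x := by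
    have ha : HasDerivAt (fun b : ℝ => 2*(1-ρ)*b^2) (2*(1-ρ)*(2*x^1)) x :=
      (hasDerivAt_pow 2 x).const_mul _
    have hb : HasDerivAt (fun b : ℝ => 1-b) (-1 : ℝ) x := by
      simpa using (hasDerivAt_id x).const_sub 1
    exact (ha.mul hb).mul_const k
  have := (show HasDerivAt (fun b : ℝ => (k*b^2 + b - 1)^2 + 2*(1-ρ)*b^2*(1-b)*k) _ x from h2.add h3).deriv
  rw [this]; ring

lemma fderiv2 (k ρ : ℝ) :
    deriv (fun x : ℝ => 4*k^2*x^3+6*k*ρ*x^2+2*(1-2*k*ρ)*x-2)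
      = fun x => 12*k^2*x^2+12*k*ρ*x+2-4*k*ρ := by
  funext x
  have h1 : HasDerivAt (fun y : ℝ => 4*k^2*y^3) (4*k^2*(3*x^2)) x := by
    simpa using (hasDerivAt_pow 3 x).const_mul (4*k^2)
  have h2 : HasDerivAt (fun y : ℝ => 6*k*ρ*y^2) (6*k*ρ*(2*x^1)) x := by
    simpa using (hasDerivAt_pow 2 x).const_mul (6*k*ρ)
  have h3 : HasDerivAt (fun y : ℝ => 2*(1-2*k*ρ)*y) (2*(1-2*k*ρ)) x := by
    simpa using (hasDerivAt_id x).const_mul (2*(1-2*k*ρ))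
  have := (show HasDerivAt (fun x : ℝ => 4*k^2*x^3+6*k*ρ*x^2+2*(1-2*k*ρ)*x-2) _ x from ((h1.add h2).add h3).sub_const 2).deriv
  rw [this]; ring


set_option maxHeartbeats 1000000 in
lemma no_two (k ρ a b : ℝ) (hk : 0 < k) (h1 : -1 < ρ) (h2 : ρ < 1)
    (hab : a ≠ b) (ha0 : 0 < a) (ha2 : a < 2) (hb0 : 0 < b) (hb2 : b < 2)
    (hDa : 4*k^2*a^3+6*k*ρ*a^2+2*(1-2*k*ρ)*a-2 = 0)
    (hDb : 4*k^2*b^3+6*k*ρ*b^2+2*(1-2*k*ρ)*b-2 = 0) : False := by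
  set z : ℝ := (-(3*ρ) - 2*k*(a+b))/(2*k) with hzdef
  have hz : 2*k*z + 3*ρ + 2*k*(a+b) = 0 := by
    rw [hzdef]; field_simp; ring
  have habne : a - b ≠ 0 := sub_ne_zero.mpr hab
  have hPab : (2*(1-2*k*ρ) - 4*k^2*(a*b+a*z+b*z)) * (a-b) = 0 := by
    linear_combination hDa - hDb - ((a-b)*(a+b)*2*k)*hz
  have hP : 2*(1-2*k*ρ) - 4*k^2*(a*b+a*z+b*z) = 0 :=
    (mul_eq_zero.mp hPab).resolve_right habne
  have hQ : -2 + 4*k^2*(a*b*z) = 0 := by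
    linear_combination hDa - a*hP - (2*k*a^2)*hz
  have hVa : 12*k^2*a^2+12*k*ρ*a+2-4*k*ρ = 4*k^2*((a-b)*(a-z)) := by
    linear_combination hP + (4*a*k)*hz
  have hVb : 12*k^2*b^2+12*k*ρ*b+2-4*k*ρ = 4*k^2*((b-a)*(b-z)) := by
    linear_combination hP + (4*b*k)*hz
  have hDz : 4*k^2*z^3+6*k*ρ*z^2+2*(1-2*k*ρ)*z-2 = 0 := by
    linear_combination z*hP + hQ + (2*k*z^2)*hz
  have h4k : (0:ℝ) < 4*k^2 := by positivity
  have hKa := key k ρ a hk h1 h2 ha0 ha2 hDa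
  have hKb := key k ρ b hk h1 h2 hb0 hb2 hDb
  have hpa : 0 < (a-b)*(a-z) := by
    by_contra h
    push_neg at h
    nlinarith [mul_nonpos_of_nonneg_of_nonpos h4k.le h]
  have hpb : 0 < (b-a)*(b-z) := by
    by_contra h
    push_neg at h
    nlinarith [mul_nonpos_of_nonneg_of_nonpos h4k.le h]
  have hneg : (z-a)*(z-b) < 0 := by
    by_contra h
    push_neg at h
    nlinarith [mul_pos hpa hpb, mul_nonneg h (sq_nonneg (a-b))]
  have hz0 : 0 < z := by
    by_contra h
    push_neg at h
    nlinarith [mul_pos_of_neg_of_neg (show z - a < 0 by linarith) (show z - b < 0 by linarith)]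
  have hz2 : z < 2 := by
    by_contra h
    push_neg at h
    nlinarith [mul_pos (show 0 < z - a by linarith) (show 0 < z - b by linarith)]
  have hKz := key k ρ z hk h1 h2 hz0 hz2 hDz
  have hVz : 12*k^2*z^2+12*k*ρ*z+2-4*k*ρ = 4*k^2*((z-a)*(z-b)) := by
    linear_combination hP + (4*z*k)*hz
  nlinarith [mul_neg_of_pos_of_neg h4k hneg]

-- root s of k s^2 - s + 1 in (1,2) when 0 < k < 1/4
lemma small_k (k : ℝ) (hk : 0 < k) (hk4 : k < 1/4) :
    ∃ s : ℝ, 1 < s ∧ s < 2 ∧ k*s^2 - s + 1 = 0 := by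
  set d : ℝ := Real.sqrt (1 - 4*k) with hddef
  have hd2 : d^2 = 1 - 4*k := Real.sq_sqrt (by linarith)
  have hd0 : 0 < d := Real.sqrt_pos.mpr (by linarith)
  have hd1 : d < 1 := by nlinarith
  refine ⟨(1-d)/(2*k), ?_, ?_, ?_⟩
  · rw [lt_div_iff₀ (by positivity)]
    nlinarith
  · rw [div_lt_iff₀ (by positivity)]
    nlinarith
  · field_simp
    ring_nf
    nlinarith [hd2]

lemma mirror (k ρ b b' : ℝ) (hk : 0 < k) (h2 : ρ < 1)
    (hsum : k*(b+b') = -1) (hlt : b < b') :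
    (k*b'^2 + b' - 1)^2 + 2*(1-ρ)*b'^2*(1-b')*k
      < (k*b^2 + b - 1)^2 + 2*(1-ρ)*b^2*(1-b)*k := by
  have h0 : k*(b+b') + 1 = 0 := by linarith
  have hbb : b + b' < 0 := by
    by_contra h
    push_neg at h
    nlinarith [mul_nonneg hk.le h]
  have h5 : 0 < (b'-b) * ((b^2+b*b'+b'^2) - (b+b')) := by
    apply mul_pos (by linarith)
    nlinarith [sq_nonneg (b+b'), sq_nonneg (b-b')]
  have hkey : (k*b^2+b-1)^2 + 2*(1-ρ)*b^2*(1-b)*k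
      - ((k*b'^2+b'-1)^2 + 2*(1-ρ)*b'^2*(1-b')*k)
      = (b-b')*((k*(b+b')+1)*((k*b^2+b-1)+(k*b'^2+b'-1)))
        + 2*(1-ρ)*k*((b'-b)*((b^2+b*b'+b'^2)-(b+b'))) := by ring
  rw [h0] at hkey
  nlinarith [mul_pos (mul_pos (show (0:ℝ) < 2*(1-ρ) by linarith) hk) h5]

lemma beats0 (k ρ : ℝ) (hk : 0 < k) (h1 : -1 < ρ) (h2 : ρ < 1) :
    ∃ x : ℝ, 0 < x ∧ x ≤ 2 ∧
      (k*x^2 + x - 1)^2 + 2*(1-ρ)*x^2*(1-x)*k ≤ 1 - x := by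
  set x : ℝ := min (1/2) (1/(4*k)) with hxdef
  have hx0 : 0 < x := lt_min (by norm_num) (by positivity)
  have hx1 : x ≤ 1/2 := min_le_left _ _
  have hkx : k * x ≤ 1/4 := by
    have h := min_le_right (1/2 : ℝ) (1/(4*k))
    rw [← hxdef, le_div_iff₀ (by positivity)] at h
    linarith
  refine ⟨x, hx0, by linarith, ?_⟩
  have hv : k*x^2 ≤ x/4 := by nlinarith [mul_le_mul_of_nonneg_right hkx hx0.le]
  have hvpos : 0 < k*x^2 := by positivity
  have hA : (k*x^2+x-1)^2 ≤ (1-x)^2 := by nlinarith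
  have e : (1-ρ)*(k*x^2) ≤ 2*(x/4) :=
    mul_le_mul (by linarith) hv hvpos.le (by norm_num)
  have hB : 2*(1-ρ)*x^2*(1-x)*k ≤ x*(1-x) := by
    nlinarith [mul_le_mul_of_nonneg_right e (show (0:ℝ) ≤ 1-x by linarith)]
  nlinarith

lemma beats2_small (k ρ s x : ℝ) (hk : 0 < k) (h1 : -1 < ρ)
    (hs1 : 1 < s) (hs2 : s < 2) (hroot : k*s^2 - s + 1 = 0) (hx : 2 < x) :
    (k*s^2 + s - 1)^2 + 2*(1-ρ)*s^2*(1-s)*k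
      < (k*x^2 + x - 1)^2 + 2*(1-ρ)*x^2*(1-x)*k := by
  have h0 : (k*s^2-s+1)^2 = 0 := by rw [hroot]; ring
  have hfac : 0 < (x-s)*((x^2-x) + x*s + (s^2-s)) := by
    apply mul_pos (by linarith)
    nlinarith
  have hdiff : 0 < 2*(1+ρ)*k*((x-s)*((x^2-x) + x*s + (s^2-s))) :=
    mul_pos (mul_pos (by linarith) hk) hfac
  nlinarith [sq_nonneg (k*x^2-x+1), h0, hdiff]

lemma beats2_bigright (k ρ x : ℝ) (hk4 : 1/4 ≤ k) (h1 : -1 < ρ) (hx : 2 < x) :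
    (k*2^2 + 2 - 1)^2 + 2*(1-ρ)*2^2*(1-2)*k
      < (k*x^2 + x - 1)^2 + 2*(1-ρ)*x^2*(1-x)*k := by
  have hk : 0 < k := by linarith
  have e1 : 0 ≤ (x-2)*(k*(x+2)-1) := by
    apply mul_nonneg (by linarith)
    nlinarith
  have hA : 0 ≤ 4*k-1 := by linarith
  have hsq : (4*k-1)^2 ≤ (k*x^2-x+1)^2 := by
    nlinarith [mul_nonneg e1 (show 0 ≤ 2*(4*k-1) + (x-2)*(k*(x+2)-1) by nlinarith)]
  have hd : 0 < 2*(1+ρ)*k*(x^2*(x-1) - 4) := by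
    apply mul_pos (mul_pos (by linarith) hk)
    nlinarith
  nlinarith [hsq, hd]

set_option maxHeartbeats 1000000 in
lemma beats2_big (k ρ : ℝ) (hk4 : 1/4 ≤ k) (h1 : -1 < ρ) (h2 : ρ < 1) :
    ∃ x : ℝ, 0 ≤ x ∧ x < 2 ∧
      (k*x^2 + x - 1)^2 + 2*(1-ρ)*x^2*(1-x)*k
        < (k*2^2 + 2 - 1)^2 + 2*(1-ρ)*2^2*(1-2)*k := by
  have hk : 0 < k := by linarith
  set t : ℝ := min 1 ((1+ρ)/(2*k)) with htdef
  have ht0 : 0 < t := lt_min one_pos (div_pos (by linarith) (by positivity))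
  have ht1 : t ≤ 1 := min_le_left _ _
  have hkt : 2*k*t ≤ 1+ρ := by
    have h := min_le_right (1:ℝ) ((1+ρ)/(2*k))
    rw [← htdef, le_div_iff₀ (by positivity)] at h
    linarith
  refine ⟨2-t, by linarith, by linarith, ?_⟩
  have hkey : (k*2^2 + 2 - 1)^2 + 2*(1-ρ)*2^2*(1-2)*k
      - ((k*(2-t)^2 + (2-t) - 1)^2 + 2*(1-ρ)*(2-t)^2*(1-(2-t))*k)
      = t*(((4*k-1)-k*t)*((4*k-1)*(2-t)+k*t^2)) + 2*(1+ρ)*(k*(t*(8-5*t+t^2))) := by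
    ring
  have hA : 0 ≤ 4*k-1 := by linarith
  have h85 : 4 ≤ 8-5*t+t^2 := by nlinarith
  rcases le_or_gt (k*t) (4*k-1) with hc | hc
  · -- easy case: both terms nonneg, second positive
    have e1 : 0 ≤ ((4*k-1)-k*t)*((4*k-1)*(2-t)+k*t^2) := by
      apply mul_nonneg (by linarith)
      have : 0 ≤ (4*k-1)*(2-t) := mul_nonneg hA (by linarith)
      nlinarith [sq_nonneg t]
    have e2 : 0 < 2*(1+ρ)*(k*(t*(8-5*t+t^2))) := by
      apply mul_pos (by linarith)
      apply mul_pos hk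
      apply mul_pos ht0 (by linarith)
    nlinarith [mul_nonneg ht0.le e1]
  · -- hard case: A < kt  (so kt ≤ (1+ρ)/2, A ≥ 0)
    have hkt1 : k*t ≤ 1 := by nlinarith
    -- term1 ≥ -3 k² t³ ≥ -3 k² t²; term2 ≥ 16 k² t²
    have hb1 : ((4*k-1)-k*t)*((4*k-1)*(2-t)+k*t^2) ≥ -(k*t)*(3*(k*t)) := by
      have hub : (4*k-1)*(2-t)+k*t^2 ≤ 3*(k*t) := by
        nlinarith [mul_le_mul_of_nonneg_left ht1 (mul_nonneg hk.le ht0.le)]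
      have hlb : ((4*k-1)-k*t) ≥ -(k*t) := by linarith
      nlinarith [mul_pos hk ht0, hub, hlb]
    have hp : 0 < k*(t*(8-5*t+t^2)) := by
      apply mul_pos hk; apply mul_pos ht0; nlinarith
    have hX4 : 4*(k*t) ≤ k*(t*(8-5*t+t^2)) := by nlinarith [mul_pos hk ht0]
    have s1 : (4*k*t)*(k*(t*(8-5*t+t^2))) ≤ (2*(1+ρ))*(k*(t*(8-5*t+t^2))) :=
      mul_le_mul_of_nonneg_right (by linarith) hp.le
    have s2 : (4*k*t)*(4*(k*t)) ≤ (4*k*t)*(k*(t*(8-5*t+t^2))) :=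
      mul_le_mul_of_nonneg_left hX4 (by positivity)
    have hb2 : 2*(1+ρ)*(k*(t*(8-5*t+t^2))) ≥ 4*(k*t)*((k*t)*4) := by nlinarith [s1, s2]
    nlinarith [mul_le_mul_of_nonneg_left hb1 ht0.le,
      mul_le_mul_of_nonneg_right ht1 (sq_nonneg (k*t)),
      mul_pos (mul_pos hk ht0) (mul_pos hk ht0)]

lemma negzone (k ρ b : ℝ) (hk : 0 < k) (h2 : ρ < 1) (hb : b < 0) (hkb : -1 ≤ k*b) :
    1 < (k*b^2 + b - 1)^2 + 2*(1-ρ)*b^2*(1-b)*k := by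
  have hval : k*b^2 + b ≤ 0 := by
    nlinarith [mul_nonneg (neg_nonneg.mpr hb.le) (show (0:ℝ) ≤ k*b+1 by linarith)]
  have hb2 : 0 < b^2 := by nlinarith
  have hpos : 0 < 2*(1-ρ)*b^2*(1-b)*k := by
    have : 0 < (2*(1-ρ)) := by linarith
    have := mul_pos (mul_pos (mul_pos this hb2) (show (0:ℝ) < 1-b by linarith)) hk
    nlinarith [this]
  nlinarith [sq_nonneg (k*b^2+b)]
set_option maxHeartbeats 1000000 in
/-- L attains a unique global minimum over ℝ at some β* ∈ (0,2), and L''(β*) > 0. -/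
theorem stmt_5 (k ρ : ℝ) (hk : 0 < k) (hρ : ρ ∈ Set.Ioo (-1 : ℝ) 1) :
    ∃ β : ℝ, β ∈ Set.Ioo (0 : ℝ) 2 ∧
      (∀ b : ℝ, b ≠ β →
        (k*β^2 + β - 1)^2 + 2*(1-ρ)*β^2*(1-β)*k <
        (k*b^2 + b - 1)^2 + 2*(1-ρ)*b^2*(1-b)*k) ∧
      deriv (deriv (fun b : ℝ => (k*b^2 + b - 1)^2 + 2*(1-ρ)*b^2*(1-b)*k)) β > 0 := by
  obtain ⟨h1, h2⟩ := hρ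
  set F : ℝ → ℝ := fun b => (k*b^2 + b - 1)^2 + 2*(1-ρ)*b^2*(1-b)*k with hFdef
  have hcont : Continuous F := by rw [hFdef]; fun_prop
  obtain ⟨β, hβI, hmin⟩ := isCompact_Icc.exists_isMinOn
    (Set.nonempty_Icc.mpr (by norm_num : (0:ℝ) ≤ 2)) hcont.continuousOn
  have hminle : ∀ x, x ∈ Set.Icc (0:ℝ) 2 → F β ≤ F x := fun x hx => hmin hx
  obtain ⟨x₀, hx₀0, hx₀2, hx₀val⟩ := beats0 k ρ hk h1 h2
  have hx₀lt : F x₀ < 1 := by simp only [hFdef]; linarith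
  have hFβ1 : F β < 1 := lt_of_le_of_lt (hminle x₀ ⟨hx₀0.le, hx₀2⟩) hx₀lt
  have hF0 : F 0 = 1 := by simp only [hFdef]; norm_num
  have hbeat2 : ∃ x, x ∈ Set.Icc (0:ℝ) 2 ∧ F x < F 2 := by
    rcases lt_or_ge k (1/4) with hk4 | hk4
    · obtain ⟨s, hs1, hs2, hroot⟩ := small_k k hk hk4
      refine ⟨s, ⟨by linarith, by linarith⟩, ?_⟩
      have h0sq : (k*s^2-s+1)^2 = 0 := by rw [hroot]; ring
      have hs4 : s^2*(s-1) < 4 := by nlinarith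
      have hpr : 0 < 2*(1+ρ)*k*(4 - s^2*(s-1)) :=
        mul_pos (mul_pos (by linarith) hk) (by linarith)
      simp only [hFdef]
      nlinarith [h0sq, sq_nonneg (4*k-1), hpr]
    · obtain ⟨x, hx0, hx2, hxval⟩ := beats2_big k ρ hk4 h1 h2
      exact ⟨x, ⟨hx0, hx2.le⟩, by simp only [hFdef]; linarith⟩
  have hβ0 : β ≠ 0 := by
    intro h
    rw [h, hF0] at hFβ1
    exact lt_irrefl _ hFβ1
  obtain ⟨x₂, hx₂I, hx₂val⟩ := hbeat2
  have hF2 : F β < F 2 := lt_of_le_of_lt (hminle x₂ hx₂I) hx₂val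
  have hβ2 : β ≠ 2 := by
    intro h
    rw [h] at hF2
    exact lt_irrefl _ hF2
  have hβIoo : β ∈ Set.Ioo (0:ℝ) 2 :=
    ⟨hβI.1.lt_of_ne (Ne.symm hβ0), hβI.2.lt_of_ne hβ2⟩
  have hd1 : deriv F = fun x => 4*k^2*x^3+6*k*ρ*x^2+2*(1-2*k*ρ)*x-2 := by
    rw [hFdef]; exact fderiv1 k ρ
  have hlocβ : IsLocalMin F β := hmin.isLocalMin (Icc_mem_nhds hβIoo.1 hβIoo.2)
  have hcritβ : 4*k^2*β^3+6*k*ρ*β^2+2*(1-2*k*ρ)*β-2 = 0 := by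
    have h := hlocβ.deriv_eq_zero
    rw [hd1] at h
    simpa using h
  have hgt2 : ∀ x : ℝ, 2 < x → F β < F x := by
    intro x hx
    rcases lt_or_ge k (1/4) with hk4 | hk4
    · obtain ⟨s, hs1, hs2, hroot⟩ := small_k k hk hk4
      have hss := beats2_small k ρ s x hk h1 hs1 hs2 hroot hx
      calc F β ≤ F s := hminle s ⟨by linarith, by linarith⟩
        _ < F x := by simp only [hFdef]; linarith
    · calc F β < F 2 := hF2
        _ < F x := by
            have := beats2_bigright k ρ x hk4 h1 hx
            simp only [hFdef]; linarith
  refine ⟨β, hβIoo, ?_, ?_⟩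
  · intro b hb
    show F β < F b
    rcases lt_or_ge b 0 with hbneg | hb0
    · rcases lt_or_ge (k*b) (-1) with hbb | hbb
      · set b' : ℝ := -(1/k) - b with hb'def
        have hc : k*(1/k) = 1 := by field_simp
        have hbneg' : b < -(1/k) := by nlinarith
        have hsum : k*(b+b') = -1 := by rw [hb'def]; field_simp; ring
        have h1k : 0 < 1/k := by positivity
        have hlt : b < b' := by rw [hb'def]; linarith
        have hb'pos : 0 < b' := by rw [hb'def]; linarith
        have hmir := mirror k ρ b b' hk h2 hsum hlt
        rcases le_or_gt b' 2 with hble | hbgt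
        · calc F β ≤ F b' := hminle b' ⟨hb'pos.le, hble⟩
            _ < F b := by simp only [hFdef]; linarith
        · calc F β < F b' := hgt2 b' hbgt
            _ < F b := by simp only [hFdef]; linarith
      · have hnz := negzone k ρ b hk h2 hbneg (by linarith)
        calc F β < 1 := hFβ1
          _ < F b := by simp only [hFdef]; linarith
    · rcases le_or_gt b 2 with hb2 | hb2
      · have hle : F β ≤ F b := hminle b ⟨hb0, hb2⟩
        rcases hle.lt_or_eq with hlt | heq
        · exact hlt
        · exfalso
          have hbmin : IsMinOn F (Set.Icc (0:ℝ) 2) b := by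
            apply isMinOn_iff.mpr
            intro y hy
            rw [← heq]
            exact hminle y hy
          have hb0' : b ≠ 0 := by
            intro h
            rw [h, hF0] at heq
            linarith
          have hb2' : b ≠ 2 := by
            intro h
            rw [h] at heq
            linarith
          have hbIoo : b ∈ Set.Ioo (0:ℝ) 2 :=
            ⟨hb0.lt_of_ne (Ne.symm hb0'), hb2.lt_of_ne hb2'⟩
          have hlocb : IsLocalMin F b := hbmin.isLocalMin (Icc_mem_nhds hbIoo.1 hbIoo.2)
          have hcritb : 4*k^2*b^3+6*k*ρ*b^2+2*(1-2*k*ρ)*b-2 = 0 := by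
            have h := hlocb.deriv_eq_zero
            rw [hd1] at h
            simpa using h
          exact no_two k ρ β b hk h1 h2 (Ne.symm hb) hβIoo.1 hβIoo.2 hbIoo.1 hbIoo.2
            hcritβ hcritb
      · exact hgt2 b hb2
  · have hd2 : deriv (deriv F) = fun x => 12*k^2*x^2+12*k*ρ*x+2-4*k*ρ := by
      rw [hd1]; exact fderiv2 k ρ
    show 0 < deriv (deriv F) β
    rw [hd2]
    exact key k ρ β hk h1 h2 hβIoo.1 hβIoo.2 hcritβ
end

section
/- Fix k > 0 and ρ ∈ (-1, 1). If β* is any global minimizer over ℝ of L(β) = (kβ² + β - 1)² + 2(1-ρ)β²(1-β)k, and β^fp > 0 satisfies k²(β^fp)³ + 2kρ(β^fp)² + (1 - kρ)β^fp - 1 = 0, then β* < β^fp. -/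
set_option maxHeartbeats 1000000 in
/-- Main result: any global minimizer β* of L is strictly smaller than any
positive fixed point β^fp. -/
theorem stmt_6 (k ρ : ℝ) (hk : 0 < k) (hρ : ρ ∈ Set.Ioo (-1 : ℝ) 1)
    (βs βfp : ℝ)
    (hmin : ∀ b : ℝ, (k*βs^2 + βs - 1)^2 + 2*(1-ρ)*βs^2*(1-βs)*k ≤
      (k*b^2 + b - 1)^2 + 2*(1-ρ)*b^2*(1-b)*k)
    (hfp_pos : 0 < βfp)
    (hfp : k^2 * βfp^3 + 2*k*ρ*βfp^2 + (1 - k*ρ)*βfp - 1 = 0) :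
    βs < βfp := by
  obtain ⟨hρ1, hρ2⟩ := hρ
  by_contra hcon
  push_neg at hcon  -- βfp ≤ βs
  -- Q := k βfp² - βfp + 1 > 0
  have hQ : 0 < k*βfp^2 - βfp + 1 := by
    rcases le_or_gt βfp 1 with h1 | h1
    · nlinarith [mul_pos hk (pow_pos hfp_pos 2)]
    · by_contra hQn
      push_neg at hQn
      -- (kβ-1)Q = -k(1+ρ)β(2β-1) < 0, so kβ > 1, but Q<0 forces kβ² < β-1 < β so kβ<1
      have hfac : (k*βfp - 1) * (k*βfp^2 - βfp + 1) = -(k*(1+ρ)*βfp*(2*βfp-1)) := by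
        nlinarith [hfp]
      have hrhs : 0 < k*(1+ρ)*βfp*(2*βfp-1) := by
        exact mul_pos (mul_pos (mul_pos hk (by linarith : (0:ℝ) < 1+ρ)) hfp_pos)
          (by linarith : (0:ℝ) < 2*βfp-1)
      nlinarith [hrhs, hfac, mul_pos hk hfp_pos]
  -- P := k βfp² + ρ βfp - ρ > 0, since (kβ+1)P = (1-ρ)Q + cubic
  have hP : 0 < k*βfp^2 + ρ*βfp - ρ := by
    have hkb : 0 < k*βfp + 1 := by positivity
    nlinarith [hfp, mul_pos (by linarith : (0:ℝ) < 1-ρ) hQ]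
  -- (A): for βs ≥ βfp, L(βs) ≥ L(βfp)
  have hA : (k*βfp^2 + βfp - 1)^2 + 2*(1-ρ)*βfp^2*(1-βfp)*k ≤
      (k*βs^2 + βs - 1)^2 + 2*(1-ρ)*βs^2*(1-βs)*k := by
    have ht0 : 0 ≤ βs - βfp := by linarith
    have hid : 4*k^2*(((k*βs^2 + βs - 1)^2 + 2*(1-ρ)*βs^2*(1-βs)*k)
        - ((k*βfp^2 + βfp - 1)^2 + 2*(1-ρ)*βfp^2*(1-βfp)*k))
      = 8*k^3*βfp*(k*βfp^2+ρ*βfp-ρ)*(βs-βfp)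
        + 8*k^2*(k^2*βfp^3 + 2*k*ρ*βfp^2 + (1-k*ρ)*βfp - 1)*(βs-βfp)
        + (βs-βfp)^2*((2*k^2*(βs-βfp) + 4*k^2*βfp + 2*k*ρ)^2
            + 4*k^2*(2*k*(k*βfp^2+ρ*βfp-ρ) + 1 - ρ^2)) := by ring
    have h1 : 0 ≤ 8*k^3*βfp*(k*βfp^2+ρ*βfp-ρ)*(βs-βfp) := by
      have : (0:ℝ) ≤ 8*k^3*βfp*(k*βfp^2+ρ*βfp-ρ) := by positivity
      exact mul_nonneg this ht0
    have h2 : 0 ≤ (βs-βfp)^2*((2*k^2*(βs-βfp) + 4*k^2*βfp + 2*k*ρ)^2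
        + 4*k^2*(2*k*(k*βfp^2+ρ*βfp-ρ) + 1 - ρ^2)) := by
      apply mul_nonneg (sq_nonneg _)
      have : (0:ℝ) ≤ 2*k*(k*βfp^2+ρ*βfp-ρ) + 1 - ρ^2 := by
        nlinarith [mul_pos hk hP]
      nlinarith [sq_nonneg (2*k^2*(βs-βfp) + 4*k^2*βfp + 2*k*ρ), sq_nonneg k]
    have hmid : 0 ≤ 8*k^2*(k^2*βfp^3 + 2*k*ρ*βfp^2 + (1-k*ρ)*βfp - 1)*(βs-βfp) := by
      rw [hfp]; simp
    have hk2 : (0:ℝ) < 4*k^2 := by positivity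
    have h4 : 0 ≤ 4*k^2*(((k*βs^2 + βs - 1)^2 + 2*(1-ρ)*βs^2*(1-βs)*k)
        - ((k*βfp^2 + βfp - 1)^2 + 2*(1-ρ)*βfp^2*(1-βfp)*k)) := by
      rw [hid]; linarith [h1, h2, hmid]
    by_contra hneg
    push_neg at hneg
    nlinarith [h4, mul_pos hk2 (by linarith :
      (0:ℝ) < ((k*βfp^2 + βfp - 1)^2 + 2*(1-ρ)*βfp^2*(1-βfp)*k)
        - ((k*βs^2 + βs - 1)^2 + 2*(1-ρ)*βs^2*(1-βs)*k))]
  -- now the step-left contradiction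
  set D := 2*k*βfp*(k*βfp^2 + ρ*βfp - ρ) with hD
  have hDpos : 0 < D := by positivity
  set A := 6*k^2*βfp^2 + 6*k*ρ*βfp + 1 - 2*k*ρ with hAdef
  set B := 4*k^2*βfp + 2*k*ρ with hBdef
  set S := |A| + |B| + k^2 + 1 with hS
  have hS1 : 1 ≤ S := by nlinarith [abs_nonneg A, abs_nonneg B, sq_nonneg k]
  have hSpos : 0 < S := by linarith
  set ε := min 1 (D/S) with hε
  have hε0 : 0 < ε := lt_min one_pos (div_pos hDpos hSpos)
  have hε1 : ε ≤ 1 := min_le_left _ _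
  have hεS : S * ε ≤ D := by
    have := min_le_right 1 (D/S)
    calc S * ε ≤ S * (D/S) := by nlinarith
    _ = D := by field_simp
  -- minimality at βfp - ε plus hA:
  have hmin' := hmin (βfp - ε)
  have hkey : (k*βfp^2 + βfp - 1)^2 + 2*(1-ρ)*βfp^2*(1-βfp)*k ≤
      (k*(βfp-ε)^2 + (βfp-ε) - 1)^2 + 2*(1-ρ)*(βfp-ε)^2*(1-(βfp-ε))*k :=
    le_trans hA hmin'
  -- expand: D ε ≤ A ε² - B ε³ + k² ε⁴
  have hexp : D * ε ≤ A * ε^2 - B * ε^3 + k^2 * ε^4 := by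
    have hid2 : ((k*(βfp-ε)^2 + (βfp-ε) - 1)^2 + 2*(1-ρ)*(βfp-ε)^2*(1-(βfp-ε))*k)
        - ((k*βfp^2 + βfp - 1)^2 + 2*(1-ρ)*βfp^2*(1-βfp)*k)
      = -(D + 2*(k^2*βfp^3 + 2*k*ρ*βfp^2 + (1-k*ρ)*βfp - 1))*ε
        + A*ε^2 - B*ε^3 + k^2*ε^4 := by rw [hD, hAdef, hBdef]; ring
    rw [hfp] at hid2
    linarith [hkey, hid2]
  have habsA : A ≤ |A| := le_abs_self A
  have habsB : -B ≤ |B| := neg_le_abs B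
  have hb2 : A * ε^2 - B * ε^3 + k^2 * ε^4 ≤ (S - 1) * ε^2 := by
    have h2 : ε^2 ≤ ε^2 := le_refl _
    have h3 : ε^3 ≤ ε^2 := by nlinarith [hε0, hε1]
    have h4 : ε^4 ≤ ε^2 := by nlinarith [hε0, hε1, sq_nonneg ε]
    have hk2 : (0:ℝ) ≤ k^2 := sq_nonneg k
    calc A * ε^2 - B * ε^3 + k^2 * ε^4
        ≤ |A| * ε^2 + |B| * ε^2 + k^2 * ε^2 := by
          have e3 : (0:ℝ) ≤ ε^3 := by positivity
          have b1 : -B * ε^3 ≤ |B| * ε^3 := mul_le_mul_of_nonneg_right habsB e3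
          have b2 : |B| * ε^3 ≤ |B| * ε^2 := mul_le_mul_of_nonneg_left h3 (abs_nonneg B)
          have a1 : A * ε^2 ≤ |A| * ε^2 := mul_le_mul_of_nonneg_right habsA (sq_nonneg ε)
          have c1 : k^2 * ε^4 ≤ k^2 * ε^2 := mul_le_mul_of_nonneg_left h4 hk2
          linarith
      _ = (S - 1) * ε^2 := by rw [hS]; ring
  nlinarith [hexp, hb2, hεS, hε0, hDpos, mul_pos hε0 hε0]
end

section
/- For k > 0, ρ ∈ ℝ, x > 0, and β^m = -1/(2k), define L(β) = (kβ² + β - 1)² + 2(1-ρ)β²(1-β)k. Then L(β^m - x) - L(β^m + x) = 4(1-ρ)kx(β^m(3β^m - 2) + x²). In particular, if ρ ≤ 1 this difference is nonnegative. -/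
/-- Reflection identity: L(β^m - x) - L(β^m + x) = 4(1-ρ)kx(β^m(3β^m - 2) + x²),
and this is nonnegative when ρ ≤ 1. -/
theorem stmt_8 (k ρ x : ℝ) (hk : 0 < k) (hx : 0 < x) :
    (let βm := -1/(2*k);
     let L := fun β : ℝ => (k*β^2 + β - 1)^2 + 2*(1-ρ)*β^2*(1-β)*k;
     L (βm - x) - L (βm + x) = 4*(1-ρ)*k*x*(βm*(3*βm - 2) + x^2)) ∧
    (ρ ≤ 1 →
      (let βm := -1/(2*k);
       let L := fun β : ℝ => (k*β^2 + β - 1)^2 + 2*(1-ρ)*β^2*(1-β)*k;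
       0 ≤ L (βm - x) - L (βm + x))) := by
  have hk0 : k ≠ 0 := ne_of_gt hk
  have hid : ∀ βm : ℝ, βm = -1/(2*k) →
      (fun β : ℝ => (k*β^2 + β - 1)^2 + 2*(1-ρ)*β^2*(1-β)*k) (βm - x) -
      (fun β : ℝ => (k*β^2 + β - 1)^2 + 2*(1-ρ)*β^2*(1-β)*k) (βm + x)
      = 4*(1-ρ)*k*x*(βm*(3*βm - 2) + x^2) := by
    intro βm h; subst h; field_simp; ring
  refine ⟨hid _ rfl, fun hρ => ?_⟩
  simp only
  rw [hid _ rfl]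
  have hβm : (-1/(2*k) : ℝ) < 0 := div_neg_of_neg_of_pos (by norm_num) (by linarith)
  have h2 : (0:ℝ) ≤ (-1/(2*k))*(3*(-1/(2*k)) - 2) := by
    have : 3*(-1/(2*k)) - 2 ≤ 0 := by linarith
    nlinarith
  have : (0:ℝ) ≤ (-1/(2*k))*(3*(-1/(2*k)) - 2) + x^2 := by nlinarith
  have h1ρ : 0 ≤ 1 - ρ := by linarith
  positivity
end

section
/- Fix k > 0 and ρ ∈ (-1, 1). Every global minimizer of L(β) = (kβ² + β - 1)² + 2(1-ρ)β²(1-β)k over ℝ is strictly positive. -/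
set_option maxHeartbeats 1000000 in
/-- Every global minimizer of L over ℝ is strictly positive. -/
theorem stmt_9 (k ρ : ℝ) (hk : 0 < k) (hρ : ρ ∈ Set.Ioo (-1 : ℝ) 1)
    (βs : ℝ)
    (hmin : ∀ b : ℝ, (k*βs^2 + βs - 1)^2 + 2*(1-ρ)*βs^2*(1-βs)*k ≤
      (k*b^2 + b - 1)^2 + 2*(1-ρ)*b^2*(1-b)*k) :
    0 < βs := by
  obtain ⟨hρ1, hρ2⟩ := hρ
  by_contra hle
  push_neg at hle
  have hk' : k ≠ 0 := ne_of_gt hk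
  rcases lt_or_ge βs (-1/(2*k)) with hcase | hcase
  · -- βs left of vertex: mirror point gives strictly smaller value
    have h := hmin (-1/k - βs)
    have hbmneg : -1/(2*k) < 0 := by
      apply div_neg_of_neg_of_pos <;> [norm_num; linarith]
    have hx : 0 < -1/(2*k) - βs := by linarith
    have key : (k*βs^2 + βs - 1)^2 + 2*(1-ρ)*βs^2*(1-βs)*k -
        ((k*(-1/k - βs)^2 + (-1/k - βs) - 1)^2 + 2*(1-ρ)*(-1/k - βs)^2*(1-(-1/k - βs))*k)
        = 4*(1-ρ)*k*(-1/(2*k) - βs)*(3*(-1/(2*k))^2 - 2*(-1/(2*k)) + (-1/(2*k) - βs)^2) := by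
      field_simp
      ring
    have hpos : 0 < 4*(1-ρ)*k*(-1/(2*k) - βs)*(3*(-1/(2*k))^2 - 2*(-1/(2*k)) + (-1/(2*k) - βs)^2) := by
      apply mul_pos
      apply mul_pos
      apply mul_pos
      · linarith
      · exact hk
      · exact hx
      · nlinarith [sq_nonneg (-1/(2*k)), sq_nonneg (-1/(2*k) - βs)]
    have hgt := sub_pos.mp (key ▸ hpos)
    exact absurd h (not_le.mpr hgt)
  · -- βs in [-1/(2k), 0]: L(βs) ≥ 1 but L(b) < 1 for small b > 0
    obtain ⟨b, hbpos, hbk, hb1⟩ : ∃ b : ℝ, 0 < b ∧ k * b ≤ 1/4 ∧ b < 1/2 := by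
      refine ⟨1/(2+4*k), by positivity, ?_, ?_⟩
      · rw [mul_one_div, div_le_div_iff₀ (by linarith) (by norm_num)]
        linarith
      · rw [div_lt_div_iff₀ (by linarith) (by norm_num)]; linarith
    have hbk2 : k * b^2 ≤ b/4 := by nlinarith
    have hc : 0 < k * b^2 := by positivity
    have h2 : 2*(1-ρ)*b^2*(1-b)*k ≤ 4*(k*b^2) := by
      have h3 : (0:ℝ) ≤ 4 - 2*(1-ρ)*(1-b) := by nlinarith
      nlinarith [mul_nonneg h3 hc.le]
    have hLb : (k*b^2 + b - 1)^2 + 2*(1-ρ)*b^2*(1-b)*k < 1 := by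
      nlinarith [h2, hbk2, hbpos, hb1,
        mul_nonneg (by linarith : (0:ℝ) ≤ b/4 - k*b^2) (by positivity : (0:ℝ) ≤ k*b^2 + 2*b),
        mul_pos hbpos (by linarith : (0:ℝ) < 1/2 - b)]
    have h := hmin b
    have hkβ : -(1/2) ≤ k * βs := by
      have h4 := (div_le_iff₀ (by positivity : (0:ℝ) < 2*k)).mp hcase
      nlinarith [h4]
    have hs : k*βs^2 + βs ≤ 0 := by
      nlinarith [mul_nonneg (neg_nonneg.2 hle) (by linarith : (0:ℝ) ≤ k*βs + 1)]
    have hterm2 : 0 ≤ 2*(1-ρ)*βs^2*(1-βs)*k := by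
      apply mul_nonneg _ hk.le
      apply mul_nonneg _ (by linarith : (0:ℝ) ≤ 1 - βs)
      exact mul_nonneg (by linarith : (0:ℝ) ≤ 2*(1-ρ)) (sq_nonneg βs)
    have hL1 : 1 ≤ (k*βs^2 + βs - 1)^2 := by nlinarith [hs, sq_nonneg (k*βs^2 + βs)]
    linarith [hL1, hterm2, hLb, h]
end

section
/- For k > 0, the cubic equation k²β³ + β - 1 = 0 has a unique real solution β^fp, which lies in (0, 1), and β^fp is strictly decreasing as a function of k, with β^fp → 1 as k → 0⁺ and β^fp → 0 as k → ∞. -/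
open Filter

lemma stmt12_mono (k : ℝ) (hk : 0 < k) :
    StrictMono (fun x : ℝ => k^2 * x^3 + x) := by
  intro a b hab
  simp only
  nlinarith [sq_nonneg (k*(a+b)), sq_nonneg (k*a), sq_nonneg (k*b), sq_nonneg (a+b)]

lemma stmt12_mem (k : ℝ) (hk : 0 < k) (β : ℝ) (hβ : k^2 * β^3 + β - 1 = 0) :
    β ∈ Set.Ioo (0:ℝ) 1 := by
  constructor
  · by_contra h
    push_neg at h
    nlinarith [mul_nonneg (sq_nonneg k) (sq_nonneg β)]
  · by_contra h
    push_neg at h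
    have h3 : 1 ≤ β^3 := one_le_pow₀ h
    nlinarith [mul_pos hk hk, h3]

/-- For k > 0, k²β³ + β - 1 = 0 has a unique real solution β^fp ∈ (0,1),
strictly decreasing in k, tending to 1 as k → 0⁺ and to 0 as k → ∞. -/
theorem stmt_12 (f : ℝ → ℝ)
    (hf : ∀ k : ℝ, 0 < k → k^2 * (f k)^3 + f k - 1 = 0) :
    (∀ k : ℝ, 0 < k → ∃! β : ℝ, k^2 * β^3 + β - 1 = 0) ∧
    (∀ k : ℝ, 0 < k → f k ∈ Set.Ioo (0 : ℝ) 1) ∧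
    StrictAntiOn f (Set.Ioi 0) ∧
    Tendsto f (nhdsWithin 0 (Set.Ioi 0)) (nhds 1) ∧
    Tendsto f atTop (nhds 0) := by
  refine ⟨?_, fun k hk => stmt12_mem k hk (f k) (hf k hk), ?_, ?_, ?_⟩
  · intro k hk
    refine ⟨f k, hf k hk, fun b hb => ?_⟩
    exact (stmt12_mono k hk).injective (a₁ := b) (a₂ := f k)
      (show k^2*b^3+b = k^2*(f k)^3 + f k by have h1 := hf k hk; linarith)
  · intro k1 hk1 k2 hk2 h12
    simp only [Set.mem_Ioi] at hk1 hk2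
    have e1 := hf k1 hk1
    have e2 := hf k2 hk2
    have m2 := stmt12_mem k2 hk2 (f k2) e2
    have key : k1^2 * (f k2)^3 + f k2 < k1^2 * (f k1)^3 + f k1 := by
      nlinarith [mul_pos (show (0:ℝ) < k2^2 - k1^2 by nlinarith)
        (pow_pos m2.1 3)]
    exact (stmt12_mono k1 hk1).lt_iff_lt.mp key
  · rw [Metric.tendsto_nhdsWithin_nhds]
    intro ε hε
    refine ⟨min 1 ε, by positivity, fun k hk hd => ?_⟩
    simp only [Set.mem_Ioi] at hk
    rw [Real.dist_eq] at hd ⊢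
    have e := hf k hk
    have m := stmt12_mem k hk (f k) e
    have hlb : 1 - k^2 ≤ f k := by
      nlinarith [pow_pos m.1 3, pow_le_one₀ (n:=3) (le_of_lt m.1) (le_of_lt m.2), mul_pos hk hk]
    have habs : |k - 0| = k := by rw [sub_zero, abs_of_pos hk]
    rw [habs] at hd
    have hk1 : k < 1 := lt_of_lt_of_le hd (min_le_left _ _)
    have hkε : k < ε := lt_of_lt_of_le hd (min_le_right _ _)
    rw [abs_of_nonpos (by linarith [m.2])]
    nlinarith
  · rw [Metric.tendsto_atTop]
    intro ε hε
    refine ⟨max 1 (1/ε^3), fun k hk => ?_⟩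
    have hk1 : (1:ℝ) ≤ k := le_trans (le_max_left _ _) hk
    have hk0 : (0:ℝ) < k := by linarith
    have hk3 : 1/ε^3 ≤ k := le_trans (le_max_right _ _) hk
    have e := hf k hk0
    have m := stmt12_mem k hk0 (f k) e
    rw [Real.dist_eq, sub_zero, abs_of_pos m.1]
    by_contra h
    push_neg at h
    have h1 : k^2 * ε^3 ≤ k^2 * (f k)^3 :=
      mul_le_mul_of_nonneg_left (pow_le_pow_left₀ (le_of_lt hε) h 3) (sq_nonneg k)
    have h2 : k^2 * (f k)^3 < 1 := by nlinarith [m.1]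
    have h3 : 1 ≤ k * ε^3 := by
      rw [div_le_iff₀ (by positivity)] at hk3
      linarith
    nlinarith [pow_pos hε 3]
end

section
/- For k > 0, let β^fp ∈ (0,1) be the unique real solution of k²β³ + β - 1 = 0 and let β* ∈ (0,1) be the unique real solution of 2k²β³ + β - 1 = 0. Then β* < β^fp, the ratio β*/β^fp tends to 1 as k → 0⁺, and tends to (1/2)^(1/3) as k → ∞. -/
open Filter

private lemma aux_tendsto_zero (c : ℝ) (hc : 0 < c) (h : ℝ → ℝ)
    (hh : ∀ k : ℝ, 0 < k → h k ∈ Set.Ioo (0:ℝ) 1 ∧ c * k^2 * (h k)^3 + h k - 1 = 0) :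
    Tendsto h atTop (nhds 0) := by
  rw [Metric.tendsto_atTop]
  intro ε hε
  refine ⟨1 + (c * ε^3)⁻¹, fun k hk => ?_⟩
  have hce : 0 < c * ε^3 := by positivity
  have hk1 : 1 < k := by
    have : 0 < (c * ε^3)⁻¹ := by positivity
    linarith
  have hk0 : 0 < k := by linarith
  obtain ⟨⟨h0, h1⟩, heq⟩ := hh k hk0
  rw [Real.dist_eq, sub_zero, abs_of_pos h0]
  by_contra hcon
  push_neg at hcon
  -- h k ≥ ε, so c k² ε³ ≤ c k² (h k)³ = 1 - h k < 1, but c k² ε³ > 1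
  have hεh : ε^3 ≤ (h k)^3 := pow_le_pow_left₀ hε.le hcon 3
  have h2 : c * k^2 * ε^3 ≤ c * k^2 * (h k)^3 :=
    mul_le_mul_of_nonneg_left hεh (by positivity)
  have hki : (c * ε^3)⁻¹ < k := by linarith
  have h3 : 1 < c * k^2 * ε^3 := by
    have := (inv_lt_iff_one_lt_mul₀ hce).mp hki
    nlinarith
  nlinarith

/-- With β^fp the unique root of k²β³ + β - 1 = 0 and β* the unique root of
2k²β³ + β - 1 = 0 (both in (0,1)): β* < β^fp, β*/β^fp → 1 as k → 0⁺, and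
β*/β^fp → (1/2)^(1/3) as k → ∞. -/
theorem stmt_13 (f g : ℝ → ℝ)
    (hf : ∀ k : ℝ, 0 < k → f k ∈ Set.Ioo (0 : ℝ) 1 ∧ k^2 * (f k)^3 + f k - 1 = 0)
    (hg : ∀ k : ℝ, 0 < k → g k ∈ Set.Ioo (0 : ℝ) 1 ∧ 2*k^2 * (g k)^3 + g k - 1 = 0) :
    (∀ k : ℝ, 0 < k → g k < f k) ∧
    Tendsto (fun k => g k / f k) (nhdsWithin 0 (Set.Ioi 0)) (nhds 1) ∧
    Tendsto (fun k => g k / f k) atTop (nhds ((1/2 : ℝ) ^ ((1:ℝ)/3))) := by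
  have hlt : ∀ k : ℝ, 0 < k → g k < f k := by
    intro k hk
    obtain ⟨⟨hf0, hf1⟩, hfeq⟩ := hf k hk
    obtain ⟨⟨hg0, hg1⟩, hgeq⟩ := hg k hk
    by_contra hcon
    push_neg at hcon
    have h3 : (f k)^3 ≤ (g k)^3 := pow_le_pow_left₀ hf0.le hcon 3
    have h4 : k^2 * (f k)^3 ≤ k^2 * (g k)^3 :=
      mul_le_mul_of_nonneg_left h3 (sq_nonneg k)
    have h5 : 0 < k^2 * (f k)^3 := by positivity
    linarith
  refine ⟨hlt, ?_, ?_⟩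
  · -- limit as k → 0⁺ : squeeze between 1 - 2k² and 1
    apply tendsto_of_tendsto_of_tendsto_of_le_of_le'
      (g := fun k : ℝ => 1 - 2*k^2) (h := fun _ : ℝ => (1:ℝ))
    · have : Tendsto (fun k : ℝ => 1 - 2*k^2) (nhds 0) (nhds (1 - 2*(0:ℝ)^2)) :=
        Continuous.tendsto (by continuity) 0
      simpa using this.mono_left nhdsWithin_le_nhds
    · exact tendsto_const_nhds
    · filter_upwards [self_mem_nhdsWithin] with k hk
      have hk0 : (0:ℝ) < k := hk
      obtain ⟨⟨hf0, hf1⟩, hfeq⟩ := hf k hk0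
      obtain ⟨⟨hg0, hg1⟩, hgeq⟩ := hg k hk0
      have hg3 : (g k)^3 ≤ 1 := by nlinarith [mul_pos hg0 hg0]
      have hgl : 1 - 2*k^2 ≤ g k := by
        have := mul_le_mul_of_nonneg_left hg3 (by positivity : (0:ℝ) ≤ 2*k^2)
        nlinarith
      have : g k ≤ g k / f k := by
        rw [le_div_iff₀ hf0]
        nlinarith
      linarith
    · filter_upwards [self_mem_nhdsWithin] with k hk
      have hk0 : (0:ℝ) < k := hk
      obtain ⟨⟨hf0, hf1⟩, hfeq⟩ := hf k hk0
      exact le_of_lt ((div_lt_one hf0).mpr (hlt k hk0))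
  · -- limit as k → ∞
    have hfto : Tendsto f atTop (nhds 0) := by
      apply aux_tendsto_zero 1 one_pos
      intro k hk
      refine ⟨(hf k hk).1, ?_⟩
      have := (hf k hk).2
      linarith [ (hf k hk).2, show (1:ℝ) * k^2 * (f k)^3 = k^2 * (f k)^3 from by ring]
    have hgto : Tendsto g atTop (nhds 0) := by
      apply aux_tendsto_zero 2 two_pos
      intro k hk
      refine ⟨(hg k hk).1, ?_⟩
      have := (hg k hk).2
      linarith [show (2:ℝ) * k^2 * (g k)^3 = 2*k^2 * (g k)^3 from by ring]
    have key : ∀ k : ℝ, 0 < k → (g k / f k)^3 = (1 - g k) / (2 * (1 - f k)) := by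
      intro k hk
      obtain ⟨⟨hf0, hf1⟩, hfeq⟩ := hf k hk
      obtain ⟨⟨hg0, hg1⟩, hgeq⟩ := hg k hk
      have hne : f k ≠ 0 := hf0.ne'
      have hne2 : (1 : ℝ) - f k ≠ 0 := by linarith
      field_simp
      linear_combination (-(2*(g k)^3)) * hfeq + (f k)^3 * hgeq
    have hratio3 : Tendsto (fun k => (g k / f k)^3) atTop (nhds (1/2 : ℝ)) := by
      have hlim : Tendsto (fun k => (1 - g k) / (2 * (1 - f k))) atTop
          (nhds ((1 - 0) / (2 * (1 - 0)))) := by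
        apply Tendsto.div
        · exact tendsto_const_nhds.sub hgto
        · exact (tendsto_const_nhds.sub hfto).const_mul 2
        · norm_num
      have : ((1:ℝ) - 0) / (2 * (1 - 0)) = 1/2 := by norm_num
      rw [this] at hlim
      apply hlim.congr'
      filter_upwards [eventually_gt_atTop (0:ℝ)] with k hk
      exact (key k hk).symm
    have hcont := (Real.continuousAt_rpow_const (1/2 : ℝ) ((1:ℝ)/3)
      (Or.inl (by norm_num))).tendsto.comp hratio3
    apply hcont.congr'
    filter_upwards [eventually_gt_atTop (0:ℝ)] with k hk
    obtain ⟨⟨hf0, hf1⟩, hfeq⟩ := hf k hk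
    obtain ⟨⟨hg0, hg1⟩, hgeq⟩ := hg k hk
    have hpos : 0 < g k / f k := div_pos hg0 hf0
    show ((g k / f k)^3) ^ ((1:ℝ)/3) = g k / f k
    rw [← Real.rpow_natCast (g k / f k) 3, ← Real.rpow_mul hpos.le]
    norm_num
end

section
/- For every k > 0, the unique real solutions β^fp of k²β³ + β - 1 = 0 and β* of 2k²β³ + β - 1 = 0 satisfy β^fp < β*·√2; consequently the ratio β*/β^fp is strictly decreasing in k. -/
set_option maxHeartbeats 1000000


/-- For every k > 0, the roots β^fp of k²β³ + β - 1 = 0 and β* of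
2k²β³ + β - 1 = 0 satisfy β^fp < β*·√2; consequently β*/β^fp is strictly
decreasing in k. -/
theorem stmt_14 (f g : ℝ → ℝ)
    (hf : ∀ k : ℝ, 0 < k → k^2 * (f k)^3 + f k - 1 = 0)
    (hg : ∀ k : ℝ, 0 < k → 2*k^2 * (g k)^3 + g k - 1 = 0) :
    (∀ k : ℝ, 0 < k → f k < g k * Real.sqrt 2) ∧
    StrictAntiOn (fun k => g k / f k) (Set.Ioi 0) := by
  have hs2 : Real.sqrt 2 ^ 2 = 2 := Real.sq_sqrt (by norm_num)
  have hs1 : 1 < Real.sqrt 2 := by nlinarith [Real.sqrt_nonneg 2]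
  -- basic bounds
  have hfpos : ∀ k : ℝ, 0 < k → 0 < f k := by
    intro k hk
    have h := hf k hk
    by_contra h0
    push_neg at h0
    nlinarith [mul_nonneg (mul_nonneg (sq_nonneg k) (sq_nonneg (f k))) (neg_nonneg.2 h0)]
  have hflt1 : ∀ k : ℝ, 0 < k → f k < 1 := by
    intro k hk
    have h := hf k hk
    have hp := hfpos k hk
    by_contra h0
    push_neg at h0
    nlinarith [mul_pos (mul_pos (pow_pos hk 2) hp) hp]
  have hgpos : ∀ k : ℝ, 0 < k → 0 < g k := by
    intro k hk
    have h := hg k hk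
    by_contra h0
    push_neg at h0
    nlinarith [mul_nonneg (mul_nonneg (sq_nonneg k) (sq_nonneg (g k))) (neg_nonneg.2 h0)]
  have hglf : ∀ k : ℝ, 0 < k → g k < f k := by
    intro k hk
    have h1 := hf k hk
    have h2 := hg k hk
    have hgp := hgpos k hk
    by_contra h0
    push_neg at h0
    have h3 : (f k)^3 ≤ (g k)^3 := pow_le_pow_left₀ (hfpos k hk).le h0 3
    nlinarith [mul_pos (mul_pos (mul_pos (pow_pos hk 2) hgp) hgp) hgp,
      mul_nonneg (sq_nonneg k) (sub_nonneg.2 h3)]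
  -- part 1
  have part1 : ∀ k : ℝ, 0 < k → f k < g k * Real.sqrt 2 := by
    intro k hk
    have h1 := hf k hk
    have h2 := hg k hk
    have hgp := hgpos k hk
    have hfp := hfpos k hk
    have hgf := hglf k hk
    -- f³ < 2 g³
    have hcube : (f k)^3 < 2*(g k)^3 := by
      by_contra h0
      push_neg at h0
      have := mul_le_mul_of_nonneg_left h0 (sq_nonneg k)
      nlinarith
    -- f² < 2 g²
    have hsq : (f k)^2 < 2*(g k)^2 := by
      by_contra h0
      push_neg at h0
      have h6 : (2*(g k)^2)^3 ≤ ((f k)^2)^3 := pow_le_pow_left₀ (by positivity) h0 3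
      nlinarith [pow_pos hgp 6, pow_pos hfp 3,
        mul_pos (sub_pos.2 hcube) (show (0:ℝ) < 2*(g k)^3 + (f k)^3 by positivity)]
    have h7 : Real.sqrt (2*(g k)^2) = g k * Real.sqrt 2 := by
      rw [Real.sqrt_mul (by norm_num : (0:ℝ) ≤ 2) ((g k)^2), Real.sqrt_sq hgp.le, mul_comm]
    calc f k = Real.sqrt ((f k)^2) := (Real.sqrt_sq hfp.le).symm
      _ < Real.sqrt (2*(g k)^2) := Real.sqrt_lt_sqrt (sq_nonneg (f k)) hsq
      _ = g k * Real.sqrt 2 := h7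
  refine ⟨part1, ?_⟩
  intro k₁ hk₁ k₂ hk₂ hklt
  simp only [Set.mem_Ioi] at hk₁ hk₂
  simp only []
  obtain ⟨a₁, ha₁def⟩ : ∃ x, f k₁ = x := ⟨_, rfl⟩
  obtain ⟨a₂, ha₂def⟩ : ∃ x, f k₂ = x := ⟨_, rfl⟩
  obtain ⟨b₁, hb₁def⟩ : ∃ x, g k₁ = x := ⟨_, rfl⟩
  obtain ⟨b₂, hb₂def⟩ : ∃ x, g k₂ = x := ⟨_, rfl⟩
  rw [ha₁def, ha₂def, hb₁def, hb₂def]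
  have ha₁ : 0 < a₁ := ha₁def ▸ hfpos k₁ hk₁
  have ha₂ : 0 < a₂ := ha₂def ▸ hfpos k₂ hk₂
  have hb₁ : 0 < b₁ := hb₁def ▸ hgpos k₁ hk₁
  have hb₂ : 0 < b₂ := hb₂def ▸ hgpos k₂ hk₂
  have ha₁1 : a₁ < 1 := ha₁def ▸ hflt1 k₁ hk₁
  have ha₂1 : a₂ < 1 := ha₂def ▸ hflt1 k₂ hk₂
  have hba₁ : b₁ < a₁ := by have := hglf k₁ hk₁; rw [ha₁def, hb₁def] at this; exact this
  have hba₂ : b₂ < a₂ := by have := hglf k₂ hk₂; rw [ha₂def, hb₂def] at this; exact this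
  have hp₁ : a₁ < b₁ * Real.sqrt 2 := by
    have := part1 k₁ hk₁; rw [ha₁def, hb₁def] at this; exact this
  have hp₂ : a₂ < b₂ * Real.sqrt 2 := by
    have := part1 k₂ hk₂; rw [ha₂def, hb₂def] at this; exact this
  have hfa₁ := hf k₁ hk₁
  have hfa₂ := hf k₂ hk₂
  have hga₁ := hg k₁ hk₁
  have hga₂ := hg k₂ hk₂
  rw [ha₁def] at hfa₁
  rw [hb₁def] at hga₁
  rw [ha₂def] at hfa₂
  rw [hb₂def] at hga₂
  clear ha₁def ha₂def hb₁def hb₂def hf hg part1 hfpos hgpos hflt1 hglf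
  obtain ⟨r₁, hr₁def⟩ : ∃ x, b₁ / a₁ = x := ⟨_, rfl⟩
  obtain ⟨r₂, hr₂def⟩ : ∃ x, b₂ / a₂ = x := ⟨_, rfl⟩
  rw [hr₁def, hr₂def]
  have hbr₁ : b₁ = r₁ * a₁ := by rw [← hr₁def]; field_simp
  have hbr₂ : b₂ = r₂ * a₂ := by rw [← hr₂def]; field_simp
  have hr₁pos : 0 < r₁ := hr₁def ▸ div_pos hb₁ ha₁
  have hr₂pos : 0 < r₂ := hr₂def ▸ div_pos hb₂ ha₂
  have hr₁lt1 : r₁ < 1 := hr₁def ▸ (div_lt_one ha₁).2 hba₁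
  have hr₂lt1 : r₂ < 1 := hr₂def ▸ (div_lt_one ha₂).2 hba₂
  -- main implicit relation : a * (2 r³ - r) = 2 r³ - 1
  have key : ∀ k a b r : ℝ, 0 < a → k^2 * a^3 + a - 1 = 0 →
      2*k^2 * b^3 + b - 1 = 0 → b = r * a →
      a * (2*r^3 - r) = 2*r^3 - 1 := by
    intro k a b r hap h1 h2 hreq
    rw [hreq] at h2
    have ha3 : a^3 ≠ 0 := by positivity
    apply mul_right_cancel₀ ha3
    linear_combination (2*r^3*a^3) * h1 - a^3 * h2
  have hkey₁ : a₁ * (2*r₁^3 - r₁) = 2*r₁^3 - 1 := key k₁ a₁ b₁ r₁ ha₁ hfa₁ hga₁ hbr₁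
  have hkey₂ : a₂ * (2*r₂^3 - r₂) = 2*r₂^3 - 1 := key k₂ a₂ b₂ r₂ ha₂ hfa₂ hga₂ hbr₂
  -- from part 1 : 2 r² > 1
  have h2rsq : ∀ a b r : ℝ, 0 < a → 0 < r → a < b * Real.sqrt 2 → b = r * a →
      1 < 2 * r^2 := by
    intro a b r hap hrp hp hreq
    rw [hreq] at hp
    have h1r : 1 < r * Real.sqrt 2 := by nlinarith
    have hsq' : (r * Real.sqrt 2)^2 = 2*r^2 := by rw [mul_pow, hs2]; ring
    nlinarith [h1r, hsq', mul_pos hrp (show (0:ℝ) < Real.sqrt 2 by linarith)]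
  have h2r₁sq : 1 < 2 * r₁^2 := h2rsq a₁ b₁ r₁ ha₁ hr₁pos hp₁ hbr₁
  have h2r₂sq : 1 < 2 * r₂^2 := h2rsq a₂ b₂ r₂ ha₂ hr₂pos hp₂ hbr₂
  -- 2 r³ > 1
  have h2r₁cube : 1 < 2 * r₁^3 := by
    have : 0 < a₁ * (r₁ * (2*r₁^2 - 1)) :=
      mul_pos ha₁ (mul_pos hr₁pos (by linarith))
    linarith [hkey₁, this]
  have h2r₂cube : 1 < 2 * r₂^3 := by
    have : 0 < a₂ * (r₂ * (2*r₂^2 - 1)) :=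
      mul_pos ha₂ (mul_pos hr₂pos (by linarith))
    linarith [hkey₂, this]
  -- monotonicity of a in k : a₂ < a₁
  have hamono : a₂ < a₁ := by
    by_contra h0
    push_neg at h0
    have h3 : a₁^3 ≤ a₂^3 := pow_le_pow_left₀ ha₁.le h0 3
    have hksq : k₁^2 < k₂^2 := by nlinarith
    nlinarith [mul_nonneg (sq_nonneg k₂) (sub_nonneg.2 h3),
      mul_pos (sub_pos.2 hksq) (pow_pos ha₁ 3)]
  -- suppose r₁ ≤ r₂, derive contradiction
  by_contra hcon
  push_neg at hcon
  have hD₁ : 0 < 2*r₁^3 - r₁ := by nlinarith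
  have hD₂ : 0 < 2*r₂^3 - r₂ := by nlinarith
  -- 2 r₁ r₂ > 1
  have hrr : 1 < 2 * (r₁ * r₂) := by
    by_contra h0
    push_neg at h0
    nlinarith [mul_pos hr₁pos hr₂pos, mul_pos (mul_pos hr₁pos hr₂pos) (mul_pos hr₁pos hr₂pos),
      mul_lt_mul_of_pos_left h2r₂cube (show (0:ℝ) < 2*r₁^3 by linarith)]
  -- Q > 0
  have hQ : 0 < 2*(r₁^2 + r₁*r₂ + r₂^2) - 2*r₁*r₂*(r₁+r₂) - 1 := by
    nlinarith [mul_nonneg (sq_nonneg r₁) (sub_nonneg.2 hr₂lt1.le),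
      mul_nonneg (sq_nonneg r₂) (sub_nonneg.2 hr₁lt1.le)]
  -- key identity
  have hid : (a₂ - a₁) * ((2*r₁^3 - r₁) * (2*r₂^3 - r₂)) =
      (r₂ - r₁) * (2*(r₁^2 + r₁*r₂ + r₂^2) - 2*r₁*r₂*(r₁+r₂) - 1) := by
    linear_combination (2*r₁^3 - r₁) * hkey₂ - (2*r₂^3 - r₂) * hkey₁
  have hL : (a₂ - a₁) * ((2*r₁^3 - r₁) * (2*r₂^3 - r₂)) < 0 :=
    mul_neg_of_neg_of_pos (by linarith) (mul_pos hD₁ hD₂)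
  have hR : 0 ≤ (r₂ - r₁) * (2*(r₁^2 + r₁*r₂ + r₂^2) - 2*r₁*r₂*(r₁+r₂) - 1) :=
    mul_nonneg (by linarith) hQ.le
  rw [hid] at hL
  linarith
end

section
/- In the binary signaling model with π ∈ (0,1) and c ∈ (0, π): the fixed-point policy Y^fp(1) = π, Y^fp(0) = 0 induces pooling (both types choose x = 1) and yields designer welfare -π(1-π), while the commitment-optimal policy Y*(0) = π(1-c), Y*(1) = π(1-c) + c induces full separation (x = η) and yields welfare -(1-c)²(1-π)π, which is strictly larger. Moreover the allocation spreads satisfy Δ* = c < Δ^fp = π < Δⁿ = 1. -/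
/-- Binary signaling model: the fixed-point policy (Y(1)=π, Y(0)=0) induces
pooling and gives welfare -π(1-π); the commitment policy (Y(0)=π(1-c),
Y(1)=π(1-c)+c) induces separation and gives welfare -(1-c)²(1-π)π, strictly
larger; and the spreads satisfy Δ* = c < Δ^fp = π < Δⁿ = 1. -/
theorem stmt_17 (π c : ℝ) (hπ : π ∈ Set.Ioo (0 : ℝ) 1) (hc : c ∈ Set.Ioo 0 π) :
    -- type 0 strictly prefers x = 1 under the fixed-point policy (pooling)
    ((0 : ℝ) - c*0 < π - c*1) ∧
    -- pooling welfare equals -π(1-π)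
    (-(π*(π - 1)^2 + (1-π)*(π - 0)^2) = -(π*(1-π))) ∧
    -- type 0 weakly prefers x = 0 under the commitment policy (separation)
    ((π*(1-c) + c) - c*1 ≤ π*(1-c) - c*0) ∧
    -- separation welfare equals -(1-c)²(1-π)π
    (-((1-π)*(π*(1-c) - 0)^2 + π*(π*(1-c) + c - 1)^2) = -((1-c)^2*(1-π)*π)) ∧
    -- commitment welfare strictly exceeds fixed-point welfare
    (-(π*(1-π)) < -((1-c)^2*(1-π)*π)) ∧
    -- spreads: Δ* = c < Δ^fp = π < Δⁿ = 1
    ((π*(1-c) + c) - π*(1-c) = c ∧ π - 0 = π ∧ c < π ∧ π < 1) := by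
  obtain ⟨hπ0, hπ1⟩ := hπ
  obtain ⟨hc0, hcπ⟩ := hc
  refine ⟨by linarith, by ring, by linarith, by ring, ?_, by ring, by ring, hcπ, hπ1⟩
  nlinarith [mul_pos hc0 (mul_pos (sub_pos.2 hπ1) hπ0), sq_nonneg c,
    mul_pos (mul_pos hc0 hc0) (mul_pos (sub_pos.2 hπ1) hπ0)]
end

section
/- In the binary signaling model with π ∈ (0,1), c ∈ (0, π): among all policies Y : {0,1} → ℝ with spread Δ = Y(1) - Y(0) ∈ [0, c] (so that the agent fully separates, x = η), the designer's loss (1-π)·Y(0)² + π·(Y(1) - 1)² is minimized by choosing Δ = c, Y(0) = π(1-c), Y(1) = π(1-c) + c, giving minimized loss (1-c)²(1-π)π. -/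
/-- Among separating policies (spread in [0,c]), the loss
(1-π)Y(0)² + π(Y(1)-1)² is minimized at Y(0) = π(1-c), Y(1) = π(1-c)+c,
with minimized loss (1-c)²(1-π)π. -/
theorem stmt_18 (π c : ℝ) (hπ : π ∈ Set.Ioo (0 : ℝ) 1) (hc : c ∈ Set.Ioo 0 π) :
    (∀ Y0 Y1 : ℝ, Y1 - Y0 ∈ Set.Icc (0 : ℝ) c →
      (1-π)*(π*(1-c))^2 + π*((π*(1-c) + c) - 1)^2 ≤ (1-π)*Y0^2 + π*(Y1 - 1)^2) ∧
    ((π*(1-c) + c) - π*(1-c) = c) ∧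
    ((1-π)*(π*(1-c))^2 + π*((π*(1-c) + c) - 1)^2 = (1-c)^2*(1-π)*π) := by
  obtain ⟨hπ0, hπ1⟩ := hπ
  obtain ⟨hc0, hcπ⟩ := hc
  refine ⟨?_, by ring, by ring⟩
  intro Y0 Y1 ⟨h0, h1⟩
  have hc1 : c < 1 := lt_trans hcπ hπ1
  nlinarith [sq_nonneg (Y0 - π*(1-(Y1-Y0))), mul_pos hπ0 (sub_pos.mpr hπ1),
    sq_nonneg (Y1 - Y0 - c), mul_nonneg (mul_pos hπ0 (sub_pos.mpr hπ1)).le h0,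
    mul_nonneg (mul_pos hπ0 (sub_pos.mpr hπ1)).le (sub_nonneg.mpr h1),
    mul_nonneg (mul_nonneg (mul_pos hπ0 (sub_pos.mpr hπ1)).le (sub_nonneg.mpr h1)) (sub_nonneg.mpr hc1.le)]
end

section
/- For k > 0 and ρ ∈ [0, 1), every root of the cubic L'(β) = -2(1-β) + 4k²β³ + 2ρkβ(3β - 2) on (0, ∞) is unique; i.e., L' has exactly one positive root, and L'' > 0 at that root. -/
/-- For k > 0 and ρ ∈ [0,1), L'(β) = -2(1-β) + 4k²β³ + 2ρkβ(3β-2) has exactly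
one root on (0,∞), and its derivative (L'') is positive at that root. -/
theorem stmt_19 (k ρ : ℝ) (hk : 0 < k) (hρ : ρ ∈ Set.Ico (0 : ℝ) 1) :
    (∃! β : ℝ, 0 < β ∧ -2*(1-β) + 4*k^2*β^3 + 2*ρ*k*β*(3*β - 2) = 0) ∧
    (∀ β : ℝ, 0 < β → -2*(1-β) + 4*k^2*β^3 + 2*ρ*k*β*(3*β - 2) = 0 →
      deriv (fun b : ℝ => -2*(1-b) + 4*k^2*b^3 + 2*ρ*k*b*(3*b - 2)) β > 0) := by
  obtain ⟨hρ0, hρ1⟩ := hρ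
  set f : ℝ → ℝ := fun b => -2*(1-b) + 4*k^2*b^3 + 2*ρ*k*b*(3*b - 2) with hf
  -- existence
  have hc : Continuous f := by fun_prop
  have h0 : f 0 = -2 := by simp [hf]
  have h1 : 0 < f 1 := by
    simp only [hf]
    nlinarith [mul_pos hk hk, mul_nonneg hρ0 hk.le]
  have hiv : Set.Ioo (f 0) (f 1) ⊆ f '' Set.Ioo (0:ℝ) 1 :=
    intermediate_value_Ioo (by norm_num) hc.continuousOn
  have h0mem : (0:ℝ) ∈ Set.Ioo (f 0) (f 1) := by rw [h0]; exact ⟨by norm_num, h1⟩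
  obtain ⟨β, hβmem, hβroot⟩ := hiv h0mem
  -- uniqueness key
  have key : ∀ a b : ℝ, 0 < a → 0 < b → f a = 0 → f b = 0 → a = b := by
    intro a b ha hb hfa hfb
    simp only [hf] at hfa hfb
    have h2 : (a - b) * (2 + a*b*(4*k^2*(a+b) + 6*ρ*k)) = 0 := by
      linear_combination b * hfa - a * hfb
    have hpos : 0 < 2 + a*b*(4*k^2*(a+b) + 6*ρ*k) := by
      have h3 : 0 ≤ a*b*(4*k^2*(a+b) + 6*ρ*k) := by
        apply mul_nonneg (mul_pos ha hb).le
        have := mul_nonneg hρ0 hk.le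
        nlinarith [sq_nonneg k]
      linarith
    rcases mul_eq_zero.1 h2 with h | h
    · linarith
    · linarith
  -- derivative computation
  have hD : ∀ x : ℝ, HasDerivAt f (12*k^2*x^2 + 12*ρ*k*x + (2 - 4*ρ*k)) x := by
    intro x
    have hfe : f = fun b => 4*k^2*b^3 + 6*ρ*k*b^2 + (2-4*ρ*k)*b + (-2) := by
      funext b; simp only [hf]; ring
    rw [hfe]
    have h3 : HasDerivAt (fun b:ℝ => b^3) (3*x^2) x := by
      simpa using hasDerivAt_pow 3 x
    have h2' : HasDerivAt (fun b:ℝ => b^2) (2*x) x := by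
      simpa using hasDerivAt_pow 2 x
    have := (((h3.const_mul (4*k^2)).add (h2'.const_mul (6*ρ*k))).add
      ((hasDerivAt_id x).const_mul (2-4*ρ*k))).add_const (-2)
    refine this.congr_deriv ?_
    ring
  have hderiv_pos : ∀ β : ℝ, 0 < β → f β = 0 → 0 < 12*k^2*β^2 + 12*ρ*k*β + (2 - 4*ρ*k) := by
    intro b hb hroot
    simp only [hf] at hroot
    nlinarith [mul_pos (mul_pos hk hk) (mul_pos hb (mul_pos hb hb)),
      mul_nonneg (mul_nonneg hρ0 hk.le) (mul_pos hb hb).le, mul_pos hb hb]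
  constructor
  · exact ⟨β, ⟨hβmem.1, hβroot⟩, fun b hb => key b β hb.1 hβmem.1 hb.2 hβroot⟩
  · intro b hb hroot
    rw [(hD b).deriv]
    exact hderiv_pos b hb hroot
end
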